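/- Let G be a context-free grammar over terminal alphabet {0,1} in which every nonterminal is accessible and coaccessible. If the language L(G) generated from the start symbol is well-ordered by the lexicographic order, then for every nonterminal X of G the language L(X) of terminal words derivable from X is also well-ordered by the lexicographic order. -/

import Mathlib

/-- The branching (strict) order on words: `u <ₛ v` iff they have a common
prefix followed by letters `a < b`. -/
def BranchLT {A : Type*} [LinearOrder A] (u v : List A) : Prop :=
  ∃ (w : List A) (a b : A) (u' v' : List A),
    a < b ∧ u = w ++ a :: u' ∧ v = w ++ b :: v'

/-- The proper-prefix order on words. -/
def PrefLT {A : Type*} [LinearOrder A] (u v : List A) : Prop :=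
  u <+: v ∧ u ≠ v

/-- The lexicographic order: proper prefix or branching. -/
def WordLex {A : Type*} [LinearOrder A] (u v : List A) : Prop :=
  PrefLT u v ∨ BranchLT u v

/-- A prefix language: no member is a proper prefix of another member. -/
def IsPrefixLang {A : Type*} [LinearOrder A] (L : Set (List A)) : Prop :=
  ∀ u ∈ L, ∀ v : List A, u ++ v ∈ L → v = []

/-- The lexicographic order restricted to a set of words. -/
def subLex {A : Type*} [LinearOrder A] (L : Set (List A)) : ↥L → ↥L → Prop :=
  fun a b => WordLex a.1 b.1

/-- Elementwise concatenation of two languages. -/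
def LangConcat {A : Type*} (K L : Set (List A)) : Set (List A) :=
  { w | ∃ u ∈ K, ∃ v ∈ L, w = u ++ v }

/-- `n`-fold concatenation power of a language. -/
def LangPow {A : Type*} (L : Set (List A)) : ℕ → Set (List A)
  | 0 => {[]}
  | n + 1 => LangConcat L (LangPow L n)

/-- A context-free grammar over the terminal alphabet `{0,1}` (= `Bool`,
with `false = 0 < 1 = true`), with nonterminals `N`. -/
structure CFG (N : Type) where
  start : N
  prods : N → Set (List (N ⊕ Bool))

/-- One derivation step: replace an occurrence of a nonterminal by the
right-hand side of one of its productions. -/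
def CFG.Step {N : Type} (G : CFG N) (p q : List (N ⊕ Bool)) : Prop :=
  ∃ (l r : List (N ⊕ Bool)) (X : N) (w : List (N ⊕ Bool)),
    p = l ++ Sum.inl X :: r ∧ w ∈ G.prods X ∧ q = l ++ w ++ r

/-- Derivation: the reflexive-transitive closure of `Step`. -/
def CFG.Derives {N : Type} (G : CFG N) : List (N ⊕ Bool) → List (N ⊕ Bool) → Prop :=
  Relation.ReflTransGen G.Step

/-- View a terminal word as a sentential form. -/
def liftWord {N : Type} (u : List Bool) : List (N ⊕ Bool) := u.map Sum.inr

/-- The language of terminal words derivable from a sentential form `q`. -/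
def CFG.lang {N : Type} (G : CFG N) (q : List (N ⊕ Bool)) : Set (List Bool) :=
  { u | G.Derives q (liftWord u) }

/-- The language of a nonterminal. -/
def CFG.langN {N : Type} (G : CFG N) (X : N) : Set (List Bool) :=
  G.lang [Sum.inl X]

/-- A nonterminal is accessible if it occurs in some sentential form
derivable from the start symbol. -/
def CFG.Accessible {N : Type} (G : CFG N) (X : N) : Prop :=
  ∃ q r : List (N ⊕ Bool), G.Derives [Sum.inl G.start] (q ++ Sum.inl X :: r)

section AuxOrder
variable {A : Type*} [LinearOrder A]

lemma lex_append' {u t : List A} (ht : t ≠ []) : List.Lex (· < ·) u (u ++ t) := by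
  induction u with
  | nil =>
    cases t with
    | nil => exact absurd rfl ht
    | cons b t => exact List.Lex.nil
  | cons a u ih => exact List.Lex.cons ih

lemma prefLT_iff {u v : List A} : PrefLT u v ↔ ∃ t, t ≠ [] ∧ v = u ++ t := by
  constructor
  · rintro ⟨⟨t, rfl⟩, hne⟩
    exact ⟨t, fun h => hne (by simp [h]), rfl⟩
  · rintro ⟨t, ht, rfl⟩
    refine ⟨⟨t, rfl⟩, fun h => ht ?_⟩
    have := h.symm
    simpa using this

lemma wordLex_iff_lex (u v : List A) : WordLex u v ↔ List.Lex (· < ·) u v := by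
  constructor
  · intro h
    rcases h with hp | ⟨w, a, b, u', v', hab, rfl, rfl⟩
    · obtain ⟨t, ht, rfl⟩ := prefLT_iff.mp hp
      exact lex_append' ht
    · induction w with
      | nil => exact List.Lex.rel hab
      | cons c w ih => exact List.Lex.cons ih
  · intro h
    induction h with
    | nil => exact Or.inl (prefLT_iff.mpr ⟨_, by simp, rfl⟩)
    | @cons a l₁ l₂ h ih =>
      rcases ih with hp | ⟨w, x, y, u', v', hxy, rfl, rfl⟩
      · obtain ⟨t, ht, rfl⟩ := prefLT_iff.mp hp
        exact Or.inl (prefLT_iff.mpr ⟨t, ht, by simp⟩)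
      · exact Or.inr ⟨a :: w, x, y, u', v', hxy, rfl, rfl⟩
    | @rel a l₁ b l₂ h => exact Or.inr ⟨[], a, b, l₁, l₂, h, rfl, rfl⟩

lemma wordLex_trans {u v w : List A} (h1 : WordLex u v) (h2 : WordLex v w) :
    WordLex u w := by
  rw [wordLex_iff_lex] at h1 h2 ⊢
  exact List.lex_trans (fun h₁ h₂ => lt_trans h₁ h₂) h1 h2

lemma wordLex_irrefl (u : List A) : ¬ WordLex u u := by
  rw [wordLex_iff_lex]
  exact irrefl_of (List.Lex ((· < ·) : A → A → Prop)) u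

lemma branchLT_append {u v : List A} (x y y' : List A) (h : BranchLT u v) :
    BranchLT (x ++ u ++ y) (x ++ v ++ y') := by
  obtain ⟨w, a, b, u', v', hab, rfl, rfl⟩ := h
  exact ⟨x ++ w, a, b, u' ++ y, v' ++ y', hab, by simp, by simp⟩

end AuxOrder

section AuxCFG
variable {N : Type} (G : CFG N)

lemma step_append_left {p q : List (N ⊕ Bool)} (h : G.Step p q) (x : List (N ⊕ Bool)) :
    G.Step (x ++ p) (x ++ q) := by
  obtain ⟨l, r, X, w, rfl, hw, rfl⟩ := h
  exact ⟨x ++ l, r, X, w, by simp, hw, by simp⟩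

lemma step_append_right {p q : List (N ⊕ Bool)} (h : G.Step p q) (x : List (N ⊕ Bool)) :
    G.Step (p ++ x) (q ++ x) := by
  obtain ⟨l, r, X, w, rfl, hw, rfl⟩ := h
  exact ⟨l, r ++ x, X, w, by simp, hw, by simp⟩

lemma derives_append_left {p q : List (N ⊕ Bool)} (h : G.Derives p q)
    (x : List (N ⊕ Bool)) : G.Derives (x ++ p) (x ++ q) := by
  induction h with
  | refl => exact Relation.ReflTransGen.refl
  | tail _ hstep ih => exact ih.tail (step_append_left G hstep x)

lemma derives_append_right {p q : List (N ⊕ Bool)} (h : G.Derives p q)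
    (x : List (N ⊕ Bool)) : G.Derives (p ++ x) (q ++ x) := by
  induction h with
  | refl => exact Relation.ReflTransGen.refl
  | tail _ hstep ih => exact ih.tail (step_append_right G hstep x)

lemma derives_append {p p' q q' : List (N ⊕ Bool)} (h1 : G.Derives p p')
    (h2 : G.Derives q q') : G.Derives (p ++ q) (p' ++ q') :=
  Relation.ReflTransGen.trans (derives_append_right G h1 q) (derives_append_left G h2 p')

lemma derives_terminal (hco : ∀ X : N, (G.langN X).Nonempty) :
    ∀ p : List (N ⊕ Bool), ∃ t : List Bool, G.Derives p (liftWord t) := by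
  intro p
  induction p with
  | nil => exact ⟨[], Relation.ReflTransGen.refl⟩
  | cons a p ih =>
    obtain ⟨t, ht⟩ := ih
    cases a with
    | inr b =>
      refine ⟨b :: t, ?_⟩
      have := derives_append G (Relation.ReflTransGen.refl (a := [Sum.inr b])) ht
      simpa [liftWord] using this
    | inl X =>
      obtain ⟨u, hu⟩ := hco X
      refine ⟨u ++ t, ?_⟩
      have hu' : G.Derives [Sum.inl X] (liftWord u) := hu
      have := derives_append G hu' ht
      simpa [liftWord] using this

lemma wrap_lemma (hacc : ∀ X : N, G.Accessible X)
    (hco : ∀ X : N, (G.langN X).Nonempty) (X : N) :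
    ∃ v w : List Bool, ∀ u ∈ G.langN X, v ++ u ++ w ∈ G.langN G.start := by
  obtain ⟨q, r, hd⟩ := hacc X
  obtain ⟨v, hv⟩ := derives_terminal G hco q
  obtain ⟨w, hw⟩ := derives_terminal G hco r
  refine ⟨v, w, fun u hu => ?_⟩
  have hu' : G.Derives [Sum.inl X] (liftWord u) := hu
  have h1 : G.Derives (q ++ ([Sum.inl X] ++ r))
      (liftWord v ++ (liftWord u ++ liftWord w)) :=
    derives_append G hv (derives_append G hu' hw)
  have h2 : G.Derives [Sum.inl G.start] (liftWord (v ++ u ++ w)) := by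
    refine Relation.ReflTransGen.trans hd ?_
    simpa [liftWord, List.append_assoc, CFG.Derives] using h1
  exact h2

end AuxCFG

lemma exists_branch_subseq (u : ℕ → List Bool)
    (hdesc : ∀ n, WordLex (u (n + 1)) (u n)) :
    ∃ φ : ℕ → ℕ, ∀ n, BranchLT (u (φ (n + 1))) (u (φ n)) := by
  have hlt : ∀ i j, i < j → WordLex (u j) (u i) := by
    intro i j hij
    induction hij with
    | refl => exact hdesc i
    | step _ ih => exact wordLex_trans (hdesc _) ih
  have key : ∀ i, ∃ j, i < j ∧ BranchLT (u j) (u i) := by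
    intro i
    by_contra hcon
    push_neg at hcon
    have hpref : ∀ j, i < j → PrefLT (u j) (u i) := by
      intro j hj
      rcases hlt i j hj with hp | hb
      · exact hp
      · exact absurd hb (hcon j hj)
    have hfin : ∀ k : ℕ, u (i + 1 + k) ∈ (u i).inits := by
      intro k
      rw [List.mem_inits]
      exact (hpref _ (by omega)).1
    have : ∃ k k' : ℕ, k ≠ k' ∧
        (⟨u (i + 1 + k), hfin k⟩ : {l // l ∈ (u i).inits}) = ⟨u (i + 1 + k'), hfin k'⟩ := by
      obtain ⟨k, k', hne, heq⟩ := Finite.exists_ne_map_eq_of_infinite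
        (fun k : ℕ => (⟨u (i + 1 + k), hfin k⟩ : {l // l ∈ (u i).inits}))
      exact ⟨k, k', hne, heq⟩
    obtain ⟨k, k', hne, heq⟩ := this
    have heq' : u (i + 1 + k) = u (i + 1 + k') := congrArg Subtype.val heq
    rcases Nat.lt_or_ge k k' with h | h
    · have := hlt (i + 1 + k) (i + 1 + k') (by omega)
      rw [heq'] at this
      exact wordLex_irrefl _ this
    · have hk : k' < k := by omega
      have := hlt (i + 1 + k') (i + 1 + k) (by omega)
      rw [heq'] at this
      exact wordLex_irrefl _ this
  let φ : ℕ → ℕ := fun n => n.rec 0 (fun _ m => Classical.choose (key m))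
  refine ⟨φ, fun n => ?_⟩
  exact (Classical.choose_spec (key (φ n))).2

/-- If every nonterminal of `G` is accessible and coaccessible and `L(G)`
is well-ordered by the lexicographic order, then so is `L(X)` for every
nonterminal `X`. -/

theorem stmt12 {N : Type} (G : CFG N)
    (hacc : ∀ X : N, G.Accessible X)
    (hco : ∀ X : N, (G.langN X).Nonempty)
    (hwo : IsWellOrder ↥(G.langN G.start) (subLex (G.langN G.start))) :
    ∀ X : N, IsWellOrder ↥(G.langN X) (subLex (G.langN X)) := by
  intro X
  haveI htri : IsTrichotomous ↥(G.langN X) (subLex (G.langN X)) := ⟨fun a b hab hba => by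
    rcases trichotomous_of (List.Lex ((· < ·) : Bool → Bool → Prop)) a.1 b.1 with h | h | h
    · exact absurd ((wordLex_iff_lex _ _).mpr h) hab
    · exact Subtype.ext h
    · exact absurd ((wordLex_iff_lex _ _).mpr h) hba⟩
  haveI htr : IsTrans ↥(G.langN X) (subLex (G.langN X)) :=
    ⟨fun _ _ _ => wordLex_trans⟩
  haveI : IsStrictOrder ↥(G.langN X) (subLex (G.langN X)) :=
    { irrefl := fun a => wordLex_irrefl a.1
      trans := fun _ _ _ => wordLex_trans }
  haveI hwf : IsWellFounded ↥(G.langN X) (subLex (G.langN X)) := by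
    constructor
    rw [RelEmbedding.wellFounded_iff_isEmpty]
    constructor
    intro f
    obtain ⟨v, w, hvw⟩ := wrap_lemma G hacc hco X
    set u : ℕ → List Bool := fun n => ((f n) : ↥(G.langN X)).1 with hu
    have hdesc : ∀ n, WordLex (u (n + 1)) (u n) := fun n =>
      f.map_rel_iff.mpr (Nat.lt_succ_self n)
    obtain ⟨φ, hφ⟩ := exists_branch_subseq u hdesc
    have g : ℕ → ↥(G.langN G.start) := fun n =>
      ⟨v ++ u (φ n) ++ w, hvw _ ((f (φ n)) : ↥(G.langN X)).2⟩
    let g' : ℕ → ↥(G.langN G.start) := fun n =>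
      ⟨v ++ u (φ n) ++ w, hvw _ ((f (φ n)) : ↥(G.langN X)).2⟩
    have hg : ∀ n, subLex (G.langN G.start) (g' (n + 1)) (g' n) := fun n =>
      Or.inr (branchLT_append v w w (hφ n))
    haveI : IsStrictOrder ↥(G.langN G.start) (subLex (G.langN G.start)) :=
      { irrefl := fun a => wordLex_irrefl a.1
        trans := fun _ _ _ => wordLex_trans }
    exact (RelEmbedding.wellFounded_iff_isEmpty.mp
      hwo.toIsWellFounded.wf).false (RelEmbedding.natGT g' hg)
  exact ⟨⟩
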